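/- Let r ≥ 1, n ≥ 3r, n ≡ r (mod 2). The graph C(n,r) = K₃ * ((r−1)K₃ ⊎ ((n−3r)/2)K₂) is well covered: every maximal independent set of C(n,r) has the same cardinality. -/

import Mathlib

attribute [local instance] Classical.propDecidable

/-- `s` is an independent set of vertices of `G`. -/
def IsIndep {V : Type*} (G : SimpleGraph V) (s : Finset V) : Prop :=
  ∀ u ∈ s, ∀ v ∈ s, ¬ G.Adj u v

/-- `s` is a maximal independent set of vertices of `G`. -/
def IsMaxlIndep {V : Type*} (G : SimpleGraph V) (s : Finset V) : Prop :=
  IsIndep G s ∧ ∀ t : Finset V, IsIndep G t → s ⊆ t → s = t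

/-- `m(G)`: the number of maximal independent sets of `G`. -/
noncomputable def numMaxlIndep {V : Type*} [Fintype V] (G : SimpleGraph V) : ℕ :=
  Set.ncard {s : Finset V | IsMaxlIndep G s}

/-- Component label for `C(n,r)`: vertices `0,1,2` form the central triangle,
vertices `3,…,3r-1` form `r-1` triangles, and vertices `3r,…,n-1` form
`(n-3r)/2` disjoint edges. -/
def CnrLabel (r i : ℕ) : ℕ :=
  if i < 3 then 0 else if i < 3 * r then 1 + (i - 3) / 3 else r + (i - 3 * r) / 2

/-- `i` is the vertex of its component joined to the distinguished vertex
`v₀ = 0` of the central triangle. -/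
def CnrAnchor (r i : ℕ) : Prop :=
  (3 ≤ i ∧ i < 3 * r ∧ i % 3 = 0) ∨ (3 * r ≤ i ∧ (i - 3 * r) % 2 = 0)

/-- The graph `C(n,r) = K₃ * ((r-1)K₃ ⊎ ((n-3r)/2)K₂)` on `Fin n`. -/
def Cnr (n r : ℕ) : SimpleGraph (Fin n) where
  Adj a b := a ≠ b ∧
    (CnrLabel r (a : ℕ) = CnrLabel r (b : ℕ) ∨
      ((a : ℕ) = 0 ∧ CnrAnchor r (b : ℕ)) ∨
      ((b : ℕ) = 0 ∧ CnrAnchor r (a : ℕ)))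
  symm := ⟨by
    rintro a b ⟨h1, h2 | h2 | h2⟩
    · exact ⟨h1.symm, Or.inl h2.symm⟩
    · exact ⟨h1.symm, Or.inr (Or.inr h2)⟩
    · exact ⟨h1.symm, Or.inr (Or.inl h2)⟩⟩
  loopless := ⟨by rintro a ⟨h1, _⟩; exact h1 rfl⟩

/-- `C(n,r)` is well covered: all of its maximal independent sets have the
same cardinality. -/
theorem stmt16 (n r : ℕ) (hr : 1 ≤ r) (hn : 3 * r ≤ n) (hpar : n % 2 = r % 2) :
    ∀ s t : Finset (Fin n),
      IsMaxlIndep (Cnr n r) s → IsMaxlIndep (Cnr n r) t → s.card = t.card := by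
  set N := r + (n - 3 * r) / 2 with hN
  suffices h : ∀ s : Finset (Fin n), IsMaxlIndep (Cnr n r) s → s.card = N by
    intro s t hs ht; rw [h s hs, h t ht]
  intro s hs
  obtain ⟨hind, hmax⟩ := hs
  have hlabel_lt : ∀ i : Fin n, CnrLabel r (i : ℕ) < N := by
    intro i
    have hi := i.isLt
    unfold CnrLabel
    split_ifs with h1 h2 <;> omega
  have hinj : Set.InjOn (fun v : Fin n => CnrLabel r (v : ℕ)) ↑s := by
    intro u hu v hv huv
    by_contra hne
    exact hind u (Finset.mem_coe.mp hu) v (Finset.mem_coe.mp hv) ⟨hne, Or.inl huv⟩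
  have hsurj : ∀ c < N, ∃ u ∈ s, CnrLabel r (u : ℕ) = c := by
    intro c hc
    by_contra hcon
    push_neg at hcon
    have hwex : ∃ w : ℕ, w < n ∧ w ≠ 0 ∧ CnrLabel r w = c ∧ ¬ CnrAnchor r w := by
      by_cases hc0 : c = 0
      · refine ⟨1, by omega, by omega, ?_, ?_⟩
        · subst hc0; unfold CnrLabel; split_ifs <;> omega
        · unfold CnrAnchor; omega
      · by_cases hcr : c < r
        · refine ⟨3 * c + 1, by omega, by omega, ?_, ?_⟩
          · unfold CnrLabel; split_ifs <;> omega
          · unfold CnrAnchor; omega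
        · refine ⟨3 * r + 2 * (c - r) + 1, by omega, by omega, ?_, ?_⟩
          · unfold CnrLabel; split_ifs <;> omega
          · unfold CnrAnchor; omega
    obtain ⟨w, hwn, hw0, hwl, hwa⟩ := hwex
    set wf : Fin n := ⟨w, hwn⟩ with hwf
    have hwns : wf ∉ s := fun h => hcon wf h hwl
    have hindep' : IsIndep (Cnr n r) (insert wf s) := by
      intro u hu v hv
      rcases Finset.mem_insert.mp hu with rfl | hu <;>
        rcases Finset.mem_insert.mp hv with rfl | hv
      · rintro ⟨hne, -⟩; exact hne rfl
      · rintro ⟨hne, h | h | h⟩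
        · exact hcon v hv (by rw [← h]; exact hwl)
        · exact hw0 h.1
        · exact hwa h.2
      · rintro ⟨hne, h | h | h⟩
        · exact hcon u hu (by rw [h]; exact hwl)
        · exact hwa h.2
        · exact hw0 h.1
      · exact hind u hu v hv
    have heq := hmax _ hindep' (Finset.subset_insert _ _)
    exact hwns (heq ▸ Finset.mem_insert_self wf s)
  have himg : s.image (fun v : Fin n => CnrLabel r (v : ℕ)) = Finset.range N := by
    apply Finset.Subset.antisymm
    · intro c hc
      obtain ⟨v, hv, rfl⟩ := Finset.mem_image.mp hc
      exact Finset.mem_range.mpr (hlabel_lt v)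
    · intro c hc
      obtain ⟨u, hu, hul⟩ := hsurj c (Finset.mem_range.mp hc)
      exact Finset.mem_image.mpr ⟨u, hu, hul⟩
  calc s.card = (s.image (fun v : Fin n => CnrLabel r (v : ℕ))).card :=
        (Finset.card_image_of_injOn hinj).symm
    _ = N := by rw [himg, Finset.card_range]
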